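/- Let l ≥ 2, n ≥ 1, and let a_1, a_2, ..., a_n be positive integers with a_1 = 1 and a_{i+1} ≤ l·a_i for all i. Let i* be an index attaining the maximum a_{i*} = max_i a_i, and suppose a_{i*} ≥ S/n where S = Σ_i a_i. Then for any real ξ with 1 ≤ ξ ≤ S/n, the number of indices i with a_i ≥ ξ is at least log_l(S/(nξ)). -/

import Mathlib

/-- Let `l ≥ 2`, `n ≥ 1`, and `a 1, …, a n` positive integers with
`a 1 = 1` and `a (i+1) ≤ l · a i`. If `i*` attains the maximum of the `a i` and
`a i* ≥ S/n` where `S = Σ_{i=1}^n a i`, then for any real `ξ` with `1 ≤ ξ ≤ S/n`,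
the number of indices `i ∈ {1,…,n}` with `a i ≥ ξ` is at least `log_l (S/(n ξ))`. -/
theorem counting_indices_above_threshold
    (l n : ℕ) (hl : 2 ≤ l) (hn : 1 ≤ n) (a : ℕ → ℕ)
    (hpos : ∀ i ∈ Finset.Icc 1 n, 0 < a i)
    (ha1 : a 1 = 1)
    (hstep : ∀ i, 1 ≤ i → i ≤ n - 1 → a (i + 1) ≤ l * a i)
    (istar : ℕ) (histar : istar ∈ Finset.Icc 1 n)
    (hmax : ∀ i ∈ Finset.Icc 1 n, a i ≤ a istar)
    (S : ℕ) (hS : S = ∑ i ∈ Finset.Icc 1 n, a i)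
    (hbig : (S : ℝ) / n ≤ (a istar : ℝ))
    (ξ : ℝ) (hξ1 : 1 ≤ ξ) (hξ2 : ξ ≤ (S : ℝ) / n) :
    Real.logb l ((S : ℝ) / (n * ξ))
      ≤ ((Finset.Icc 1 n).filter (fun i => ξ ≤ (a i : ℝ))).card := by
  have hl1 : (1:ℝ) < (l:ℝ) := by exact_mod_cast hl.trans_lt' one_lt_two
  obtain ⟨hi1, hin⟩ := Finset.mem_Icc.mp histar
  have keyA : ∀ j, j ≤ istar - 1 → a istar ≤ l ^ j * a (istar - j) := by
    intro j hj
    induction j with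
    | zero => simpa using le_refl (a istar)
    | succ k ih =>
      have h1 : a istar ≤ l ^ k * a (istar - k) := ih (by omega)
      have hi : istar - k = (istar - (k+1)) + 1 := by omega
      have hstep' : a (istar - k) ≤ l * a (istar - (k+1)) := by
        rw [hi]; exact hstep _ (by omega) (by omega)
      calc a istar ≤ l ^ k * a (istar - k) := h1
        _ ≤ l ^ k * (l * a (istar - (k+1))) := Nat.mul_le_mul_left _ hstep'
        _ = l ^ (k+1) * a (istar - (k+1)) := by ring
  set T := (Finset.Icc 1 n).filter (fun i => ξ ≤ (a i : ℝ)) with hT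
  set J := (Finset.range istar).filter (fun j => ξ * (l:ℝ)^j ≤ (a istar : ℝ)) with hJ
  have hJT : J.card ≤ T.card := by
    apply Finset.card_le_card_of_injOn (fun j => istar - j)
    · intro j hj
      simp only [hJ, Finset.mem_coe, Finset.mem_filter, Finset.mem_range] at hj
      obtain ⟨hjlt, hjle⟩ := hj
      have hA : (a istar : ℝ) ≤ (l:ℝ)^j * a (istar - j) := by
        exact_mod_cast keyA j (by omega)
      have hlpos : (0:ℝ) < (l:ℝ)^j := by positivity
      have hmul : ξ * (l:ℝ)^j ≤ (l:ℝ)^j * a (istar - j) := le_trans hjle hA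
      have hξa : ξ ≤ (a (istar - j) : ℝ) := by nlinarith
      simp only [hT, Finset.mem_coe, Finset.mem_filter, Finset.mem_Icc]
      exact ⟨⟨by omega, by omega⟩, hξa⟩
    · intro x hx y hy hxy
      simp only [hJ, Finset.coe_filter, Set.mem_setOf_eq, Finset.mem_range] at hx hy
      simp only at hxy
      omega
  have hξ0 : (0:ℝ) < ξ := lt_of_lt_of_le zero_lt_one hξ1
  have hnot : (a istar : ℝ) < ξ * (l:ℝ) ^ J.card := by
    by_contra hcon
    push_neg at hcon
    by_cases hlt : J.card < istar
    · have hsub : Finset.range (J.card + 1) ⊆ J := by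
        intro j hj
        simp only [Finset.mem_range] at hj
        simp only [hJ, Finset.mem_filter, Finset.mem_range]
        refine ⟨by omega, le_trans ?_ hcon⟩
        have hpw : (l:ℝ)^j ≤ (l:ℝ)^J.card := pow_le_pow_right₀ (le_of_lt hl1) (by omega)
        nlinarith
      have := Finset.card_le_card hsub
      rw [Finset.card_range] at this
      omega
    · push_neg at hlt
      have hA : (a istar : ℝ) ≤ (l:ℝ) ^ (istar - 1) := by
        have h := keyA (istar - 1) (le_refl _)
        have he : istar - (istar - 1) = 1 := by omega
        rw [he, ha1, mul_one] at h
        exact_mod_cast h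
      have hpw : (l:ℝ)^istar ≤ (l:ℝ)^J.card := pow_le_pow_right₀ (le_of_lt hl1) hlt
      have h2 : ξ * (l:ℝ)^istar ≤ (l:ℝ)^(istar - 1) :=
        le_trans (le_trans (by nlinarith) hcon) hA
      have h3 : (l:ℝ)^istar = (l:ℝ)^(istar-1) * l := by
        rw [← pow_succ]; congr 1; omega
      have hppos : (0:ℝ) < (l:ℝ)^(istar-1) := by positivity
      nlinarith [mul_le_mul_of_nonneg_right hξ1 (le_of_lt (mul_pos hppos (lt_trans zero_lt_one hl1)))]
  have hSpos : (0:ℝ) < S := by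
    have : 0 < a istar := hpos istar histar
    have hle : a istar ≤ S := by
      rw [hS]; exact Finset.single_le_sum (fun i _ => Nat.zero_le _) histar
    exact_mod_cast lt_of_lt_of_le this hle
  have hnpos : (0:ℝ) < n := by exact_mod_cast hn
  have hfinal : (S:ℝ)/(n*ξ) ≤ (l:ℝ)^T.card := by
    have h3 : (l:ℝ)^J.card ≤ (l:ℝ)^T.card := pow_le_pow_right₀ (le_of_lt hl1) hJT
    rw [div_le_iff₀ (by positivity)]
    have hSn : (S:ℝ) ≤ n * (a istar) := by
      rw [div_le_iff₀ hnpos] at hbig; linarith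
    nlinarith [mul_lt_mul_of_pos_left hnot hnpos,
      mul_le_mul_of_nonneg_left h3 (le_of_lt (mul_pos hnpos hξ0))]
  calc Real.logb l ((S:ℝ)/(n*ξ)) ≤ Real.logb l ((l:ℝ)^T.card) :=
        Real.logb_le_logb_of_le hl1 (by positivity) hfinal
    _ = T.card := by rw [Real.logb_pow, Real.logb_self_eq_one hl1, mul_one]
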